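/- The union of the SU(1,1)-translates of the slice points equals W: the set of all points g·q ∈ ℙ¹ × ℙ¹, where g ranges over SU(1,1) and q ranges over {z₁} ∪ {ℓ₁(t) : 0 < t < 1} ∪ {w₁} ∪ {ℓ₂(s) : s > 0}, is exactly W = {([z₁:z₂],[w₁:w₂]) : |z₂| < |z₁| and z₁w₁ − z₂w₂ ≠ 0}. -/

import Mathlib

open Matrix Complex

noncomputable section

abbrev M2 : Type := Matrix (Fin 2) (Fin 2) ℂ

/-- The diagonal matrix `diag(1,-1)`. -/
def I11 : M2 := !![1, 0; 0, -1]

/-- The conjugation `σ(g) = I₁₁ ⬝ ᵗ(ḡ)⁻¹ ⬝ I₁₁`. -/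
def sigmaC (g : M2) : M2 := I11 * ((g.map (starRingEnd ℂ))ᵀ)⁻¹ * I11

/-- `overline{σ(g)}`, the matrix acting on the second factor. -/
def tw (g : M2) : M2 := (sigmaC g).map (starRingEnd ℂ)

/-- The predicate `g ∈ SU(1,1)`. -/
def SU11 (g : M2) : Prop := g.det = 1 ∧ (g.map (starRingEnd ℂ))ᵀ * I11 * g = I11

abbrev P1 : Type := Projectivization ℂ (Fin 2 → ℂ)

lemma fstNe (a b : ℂ) (ha : a ≠ 0) : ![a, b] ≠ 0 := by
  intro h
  exact ha (by simpa using congrFun h 0)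

lemma oneNe (b : ℂ) : ![1, b] ≠ 0 := fstNe 1 b one_ne_zero

/-- The open `SL(2,ℂ)`-orbit `{ z₁w₁ - z₂w₂ ≠ 0 }` in `ℙ¹ × ℙ¹`. -/
def Omega : Set (P1 × P1) :=
  {p | ∃ (z w : Fin 2 → ℂ) (hz : z ≠ 0) (hw : w ≠ 0),
    p = (Projectivization.mk ℂ z hz, Projectivization.mk ℂ w hw) ∧
    z 0 * w 0 - z 1 * w 1 ≠ 0}

/-- The domain `W ⊂ ℙ¹ × ℙ¹`. -/
def W : Set (P1 × P1) :=
  {p | ∃ (z w : Fin 2 → ℂ) (hz : z ≠ 0) (hw : w ≠ 0),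
    p = (Projectivization.mk ℂ z hz, Projectivization.mk ℂ w hw) ∧
    ‖z 1‖ < ‖z 0‖ ∧ z 0 * w 0 - z 1 * w 1 ≠ 0}

/-- Homogeneous coordinates of the slice point `z₁ = ([1:0],[1:0])`. -/
def z1v : (Fin 2 → ℂ) × (Fin 2 → ℂ) := (![1, 0], ![1, 0])

/-- Homogeneous coordinates of the slice point `w₁ = ([1:0],[1:i])`. -/
def w1v : (Fin 2 → ℂ) × (Fin 2 → ℂ) := (![1, 0], ![1, Complex.I])

/-- Homogeneous coordinates of the slice point `ℓ₁(t)`. -/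
def l1v (t : ℝ) : (Fin 2 → ℂ) × (Fin 2 → ℂ) :=
  (![(Real.cos (Real.pi * (1 - t) / 4) : ℂ),
      Complex.I * (Real.sin (Real.pi * (1 - t) / 4) : ℂ)],
   ![(Real.cos (Real.pi * (1 - t) / 4) : ℂ),
      Complex.I * (Real.sin (Real.pi * (1 - t) / 4) : ℂ)])

/-- Homogeneous coordinates of the slice point `ℓ₂(s)`. -/
def l2v (s : ℝ) : (Fin 2 → ℂ) × (Fin 2 → ℂ) :=
  (![(Real.exp s : ℂ), Complex.I * (Real.exp (-s) : ℂ)],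
   ![(Real.exp (-s) : ℂ), Complex.I * (Real.exp s : ℂ)])

open scoped ComplexConjugate

/-- `su a b` is the SU(1,1)-shaped matrix. -/
def su (a b : ℂ) : M2 := !![a, b; conj b, conj a]

lemma su_mulVec (a b x y : ℂ) :
    (su a b).mulVec ![x, y] = ![a*x + b*y, conj b * x + conj a * y] := by
  ext i
  fin_cases i <;> simp [su, Matrix.mulVec, dotProduct, Fin.sum_univ_two]

lemma I11_mul_I11 : I11 * I11 = 1 := by
  ext i j
  fin_cases i <;> fin_cases j <;>
    simp [I11, Matrix.mul_apply, Fin.sum_univ_two]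

lemma su_mem {a b : ℂ} (h : a * conj a - b * conj b = 1) : SU11 (su a b) := by
  constructor
  · simp [su, Matrix.det_fin_two_of]
    linear_combination h
  · ext i j
    fin_cases i <;> fin_cases j <;>
      simp [su, I11, Matrix.mul_apply, Fin.sum_univ_two, Matrix.transpose_apply, Matrix.map_apply]
    · show conj a * a + -(b * conj b) = 1
      linear_combination h
    · show conj a * b + -(b * conj a) = 0
      ring
    · show conj b * a + -(a * conj b) = 0
      ring
    · show conj b * b + -(a * conj a) = -1
      linear_combination -h

lemma su_map_conj (a b : ℂ) : (su a b).map (starRingEnd ℂ) = su (conj a) (conj b) := by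
  ext i j
  fin_cases i <;> fin_cases j <;> simp [su, Matrix.map_apply]

lemma tw_eq_map_conj {g : M2} (hg : SU11 g) : tw g = g.map (starRingEnd ℂ) := by
  have hinv : ((g.map (starRingEnd ℂ))ᵀ)⁻¹ = I11 * g * I11 := by
    apply Matrix.inv_eq_right_inv
    calc (g.map (starRingEnd ℂ))ᵀ * (I11 * g * I11)
        = ((g.map (starRingEnd ℂ))ᵀ * I11 * g) * I11 := by noncomm_ring
      _ = I11 * I11 := by rw [hg.2]
      _ = 1 := I11_mul_I11
  unfold tw sigmaC
  rw [hinv]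
  calc (I11 * (I11 * g * I11) * I11).map (starRingEnd ℂ)
      = ((I11 * I11) * g * (I11 * I11)).map (starRingEnd ℂ) := by noncomm_ring
    _ = g.map (starRingEnd ℂ) := by rw [I11_mul_I11]; simp

lemma SU11_mul {g h : M2} (hg : SU11 g) (hh : SU11 h) : SU11 (g * h) := by
  constructor
  · rw [Matrix.det_mul, hg.1, hh.1, one_mul]
  · have : ((g * h).map (starRingEnd ℂ))ᵀ = (h.map (starRingEnd ℂ))ᵀ * (g.map (starRingEnd ℂ))ᵀ := by
      rw [Matrix.map_mul, Matrix.transpose_mul]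
    rw [this]
    calc (h.map (starRingEnd ℂ))ᵀ * (g.map (starRingEnd ℂ))ᵀ * I11 * (g * h)
        = (h.map (starRingEnd ℂ))ᵀ * ((g.map (starRingEnd ℂ))ᵀ * I11 * g) * h := by noncomm_ring
      _ = (h.map (starRingEnd ℂ))ᵀ * I11 * h := by rw [hg.2]
      _ = I11 := hh.2

lemma mk_eq_of (v w : Fin 2 → ℂ) (hv : v ≠ 0) (hw : w ≠ 0) (t : ℂ) (ht : t ≠ 0)
    (h : v = t • w) : Projectivization.mk ℂ v hv = Projectivization.mk ℂ w hw := by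
  rw [Projectivization.mk_eq_mk_iff]
  exact ⟨Units.mk0 t ht, by rw [h]; rfl⟩



lemma conj_mul_self (z : ℂ) : conj z * z = (normSq z : ℂ) := by
  rw [mul_comm]; exact Complex.mul_conj z

lemma su11_form {g : M2} (hg : SU11 g) :
    ∃ a b : ℂ, a * conj a - b * conj b = 1 ∧ g = su a b := by
  obtain ⟨hdet, hrel⟩ := hg
  rw [Matrix.det_fin_two] at hdet
  have e1 : conj (g 0 0) * g 0 0 - conj (g 1 0) * g 1 0 = 1 := by
    have H := congrFun (congrFun hrel 0) 0
    simp [I11, Matrix.mul_apply, Fin.sum_univ_two] at H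
    linear_combination H
  have e2 : conj (g 0 0) * g 0 1 - conj (g 1 0) * g 1 1 = 0 := by
    have H := congrFun (congrFun hrel 0) 1
    simp [I11, Matrix.mul_apply, Fin.sum_univ_two] at H
    linear_combination H
  have e3 : conj (g 0 1) * g 0 0 - conj (g 1 1) * g 1 0 = 0 := by
    have H := congrFun (congrFun hrel 1) 0
    simp [I11, Matrix.mul_apply, Fin.sum_univ_two] at H
    linear_combination H
  set a := g 0 0 with ha
  set b := g 0 1 with hb
  set c := g 1 0 with hc
  set d := g 1 1 with hdd
  have hd : d = conj a := by
    linear_combination (-d) * e1 + c * e2 + conj a * hdet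
  have ha0 : a ≠ 0 := by
    intro h0
    rw [h0] at e1
    simp at e1
    rw [conj_mul_self] at e1
    have : (normSq c : ℂ) = -1 := by linear_combination -e1
    have h2 : normSq c = -1 := by exact_mod_cast this
    have := normSq_nonneg c
    linarith
  have hcb : c = conj b := by
    rw [hd] at e3
    simp only [Complex.conj_conj] at e3
    have h4 : a * (conj b - c) = 0 := by linear_combination e3
    rcases mul_eq_zero.mp h4 with h | h
    · exact absurd h ha0
    · exact (sub_eq_zero.mp h).symm
  refine ⟨a, b, ?_, ?_⟩
  · linear_combination hdet + b * hcb - a * hd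
  · rw [Matrix.eta_fin_two g, ← ha, ← hb, ← hc, ← hdd, hd, hcb]
    rfl


lemma forward {g : M2} (hg : SU11 g) (x y u v : ℂ)
    (h1 : 0 < normSq x - normSq y) (h2 : x * u - y * v ≠ 0) :
    ‖g.mulVec ![x, y] 1‖ < ‖g.mulVec ![x, y] 0‖ ∧
    g.mulVec ![x, y] 0 * (tw g).mulVec ![u, v] 0
      - g.mulVec ![x, y] 1 * (tw g).mulVec ![u, v] 1 ≠ 0 := by
  obtain ⟨a, b, hcond, hform⟩ := su11_form hg
  have htw : tw g = su (conj a) (conj b) := by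
    rw [tw_eq_map_conj hg, hform, su_map_conj]
  rw [htw, hform, su_mulVec, su_mulVec]
  simp only [Matrix.cons_val_zero, Matrix.cons_val_one, Matrix.head_cons, Complex.conj_conj]
  constructor
  · have key1 : (a*x + b*y) * conj (a*x + b*y) - (conj b * x + conj a * y) * conj (conj b * x + conj a * y)
        = x * conj x - y * conj y := by
      simp only [map_add, _root_.map_mul, Complex.conj_conj]
      linear_combination (x * conj x - y * conj y) * hcond
    rw [Complex.mul_conj, Complex.mul_conj, Complex.mul_conj, Complex.mul_conj] at key1
    have hr : normSq (a*x + b*y) - normSq (conj b * x + conj a * y) = normSq x - normSq y := by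
      exact_mod_cast key1
    rw [Complex.norm_def, Complex.norm_def]
    exact Real.sqrt_lt_sqrt (normSq_nonneg _) (by linarith)
  · have key2 : (a*x + b*y) * (conj a * u + conj b * v)
        - (conj b * x + conj a * y) * (b * u + a * v) = x * u - y * v := by
      linear_combination (x * u - y * v) * hcond
    rw [key2]
    exact h2

lemma key (z w : Fin 2 → ℂ) (hz : z ≠ 0) (hw : w ≠ 0)
    (hlt : ‖z 1‖ < ‖z 0‖)
    (hB : z 0 * w 0 - z 1 * w 1 ≠ 0)
    (q1 q2 : Fin 2 → ℂ)
    (a' bp : ℂ) (hcond' : a' * conj a' - bp * conj bp = 1)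
    (α β : ℂ) (hα : α ≠ 0) (hβ : β ≠ 0)
    (ρ : ℝ)
    (h1 : (su a' bp).mulVec q1 = α • ![1, 0])
    (h2 : (su (conj a') (conj bp)).mulVec q2 = β • ![(1:ℂ), Complex.I * ρ])
    (hρ : ‖((w 1 - conj (z 1 / z 0) * w 0) / (w 0 - z 1 / z 0 * w 1))‖ = ρ) :
    ∃ g : M2, SU11 g ∧ ∃ (h1' : g.mulVec q1 ≠ 0) (h2' : (tw g).mulVec q2 ≠ 0),
      Projectivization.mk ℂ (g.mulVec q1) h1' = Projectivization.mk ℂ z hz ∧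
      Projectivization.mk ℂ ((tw g).mulVec q2) h2' = Projectivization.mk ℂ w hw := by
  have hz0 : z 0 ≠ 0 := by
    intro h0
    rw [h0] at hlt
    simp at hlt
    exact absurd hlt (norm_nonneg (z 1)).not_gt
  set b := z 1 / z 0 with hbdef
  have habs0 : 0 < ‖z 0‖ := by
    have := norm_nonneg (z 1); linarith
  have hbabs : ‖b‖ < 1 := by
    rw [hbdef, norm_div]
    exact (div_lt_one habs0).mpr hlt
  have hbn : normSq b < 1 := by
    rw [Complex.normSq_eq_norm_sq]
    nlinarith [norm_nonneg b]
  set d := w 0 - b * w 1 with hddef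
  have hd : d ≠ 0 := by
    intro h0
    apply hB
    have hzd : z 0 * d = z 0 * w 0 - z 1 * w 1 := by
      rw [hddef, hbdef]; field_simp
    rw [← hzd, h0, mul_zero]
  set c := (w 1 - conj b * w 0) / d with hcdef
  have h1nb : 0 < 1 - normSq b := by linarith
  set r : ℝ := (Real.sqrt (1 - normSq b))⁻¹ with hrdef
  have hrpos : 0 < r := by
    rw [hrdef]; positivity
  have hr0 : (r : ℂ) ≠ 0 := by
    exact_mod_cast hrpos.ne'
  have hrr : (r:ℝ)^2 * (1 - normSq b) = 1 := by
    rw [hrdef, inv_pow, Real.sq_sqrt h1nb.le]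
    field_simp
  have hr2 : (r:ℂ)^2 * (1 - b * conj b) = 1 := by
    rw [Complex.mul_conj b]
    exact_mod_cast hrr
  obtain ⟨a, ha1, ha2⟩ : ∃ a : ℂ, a * conj a = 1 ∧ a^2 * (Complex.I * ρ) = c := by
    by_cases hc0 : c = 0
    · refine ⟨1, by simp, ?_⟩
      have hρ0 : ρ = 0 := by rw [← hρ, hc0, norm_zero]
      rw [hρ0, hc0]
      simp
    · have hρpos : 0 < ρ := by
        rw [← hρ]
        exact norm_pos_iff.mpr hc0
      have hiρ : (Complex.I * (ρ:ℂ)) ≠ 0 := by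
        simp [Complex.I_ne_zero, Complex.ofReal_ne_zero, hρpos.ne']
      obtain ⟨a, ha⟩ := IsAlgClosed.exists_pow_nat_eq (c / (Complex.I * ρ)) (n := 2) (by norm_num)
      have h2' : ‖a ^ 2‖ = 1 := by
        rw [ha, norm_div, norm_mul, Complex.norm_I, Complex.norm_real, Real.norm_eq_abs, one_mul,
          abs_of_pos hρpos, hρ, div_self hρpos.ne']
      have habs : ‖a‖ ^ 2 = 1 := by
        rw [← norm_pow]; exact h2'
      refine ⟨a, ?_, ?_⟩
      · rw [Complex.mul_conj, ← Complex.sq_norm, habs, Complex.ofReal_one]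
      · rw [ha, div_mul_cancel₀ _ hiρ]
  have hane : a ≠ 0 := by
    intro h0; rw [h0, zero_mul] at ha1; exact zero_ne_one ha1
  have hcane : conj a ≠ 0 := by
    simpa using hane
  set g := su (r:ℂ) ((r:ℂ) * conj b) * su a 0 * su a' bp with hgdef
  have hsu1 : SU11 (su (r:ℂ) ((r:ℂ) * conj b)) := by
    apply su_mem
    simp only [_root_.map_mul, Complex.conj_conj, Complex.conj_ofReal]
    linear_combination hr2
  have hsu2 : SU11 (su a 0) := by
    apply su_mem
    simpa using ha1
  have hsu3 : SU11 (su a' bp) := su_mem hcond'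
  have hg : SU11 g := SU11_mul (SU11_mul hsu1 hsu2) hsu3
  have htwg : tw g = su (r:ℂ) ((r:ℂ) * b) * su (conj a) 0 * su (conj a') (conj bp) := by
    rw [tw_eq_map_conj hg, hgdef, Matrix.map_mul, Matrix.map_mul, su_map_conj, su_map_conj,
      su_map_conj]
    simp only [_root_.map_mul, Complex.conj_conj, Complex.conj_ofReal, map_zero]
  have hV1 : g.mulVec q1 = (α * (a * (r:ℂ)) / z 0) • z := by
    rw [hgdef, ← Matrix.mulVec_mulVec, ← Matrix.mulVec_mulVec, h1, Matrix.mulVec_smul, su_mulVec]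
    rw [show ![a * 1 + 0 * 0, conj 0 * 1 + conj a * 0] = a • ![(1:ℂ), 0] by
      ext i
      fin_cases i
      · show a * 1 + 0 * 0 = a * 1
        ring
      · show conj 0 * 1 + conj a * 0 = a * 0
        simp]
    rw [Matrix.mulVec_smul, Matrix.mulVec_smul, su_mulVec]
    have hz1 : z 1 = b * z 0 := by rw [hbdef]; field_simp
    ext i
    fin_cases i
    · show α * (a * ((r:ℂ) * 1 + (r:ℂ) * conj b * 0)) = (α * (a * (r:ℂ)) / z 0) * z 0
      field_simp
      simp
    · show α * (a * (conj ((r:ℂ) * conj b) * 1 + conj ((r:ℂ)) * 0)) = (α * (a * (r:ℂ)) / z 0) * z 1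
      rw [hz1]
      simp only [_root_.map_mul, Complex.conj_conj, Complex.conj_ofReal]
      field_simp
      ring
  have hsV1 : (α * (a * (r:ℂ)) / z 0) ≠ 0 :=
    div_ne_zero (mul_ne_zero hα (mul_ne_zero hane hr0)) hz0
  have hV1ne : g.mulVec q1 ≠ 0 := by
    rw [hV1]; exact smul_ne_zero hsV1 hz
  have hcw : conj a * c = a * (Complex.I * ρ) := by
    calc conj a * c = conj a * (a^2 * (Complex.I * ρ)) := by rw [ha2]
    _ = (a * conj a) * (a * (Complex.I * ρ)) := by ring
    _ = a * (Complex.I * ρ) := by rw [ha1, one_mul]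
  have hdd' : w 0 - b * w 1 ≠ 0 := by rw [← hddef]; exact hd
  have key1 : (r:ℂ) * 1 + (r:ℂ) * b * c = ((r:ℂ) * (1 - b * conj b) / d) * w 0 := by
    rw [hcdef, hddef]
    field_simp
    ring
  have key2 : conj ((r:ℂ) * b) * 1 + conj ((r:ℂ)) * c
      = ((r:ℂ) * (1 - b * conj b) / d) * w 1 := by
    simp only [_root_.map_mul, Complex.conj_ofReal]
    rw [hcdef]
    field_simp
    rw [hddef]
    ring
  have hV2 : (tw g).mulVec q2 = (β * conj a * ((r:ℂ) * (1 - b * conj b) / d)) • w := by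
    rw [htwg, ← Matrix.mulVec_mulVec, ← Matrix.mulVec_mulVec, h2, Matrix.mulVec_smul, su_mulVec]
    rw [show ![conj a * 1 + 0 * (Complex.I * (ρ:ℂ)),
        conj 0 * 1 + conj (conj a) * (Complex.I * (ρ:ℂ))] = (conj a) • ![(1:ℂ), c] by
      ext i
      fin_cases i
      · show conj a * 1 + 0 * (Complex.I * (ρ:ℂ)) = conj a * 1
        ring
      · show conj 0 * 1 + conj (conj a) * (Complex.I * (ρ:ℂ)) = conj a * c
        simp only [map_zero, Complex.conj_conj, zero_mul, zero_add]
        exact hcw.symm]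
    rw [Matrix.mulVec_smul, Matrix.mulVec_smul, su_mulVec]
    ext i
    fin_cases i
    · show β * (conj a * ((r:ℂ) * 1 + (r:ℂ) * b * c))
          = (β * conj a * ((r:ℂ) * (1 - b * conj b) / d)) * w 0
      linear_combination β * conj a * key1
    · show β * (conj a * (conj ((r:ℂ) * b) * 1 + conj ((r:ℂ)) * c))
          = (β * conj a * ((r:ℂ) * (1 - b * conj b) / d)) * w 1
      linear_combination β * conj a * key2
  have hsV2 : (β * conj a * ((r:ℂ) * (1 - b * conj b) / d)) ≠ 0 := by
    have hbb : (1 : ℂ) - b * conj b ≠ 0 := by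
      rw [Complex.mul_conj b]
      intro h0
      have : (normSq b : ℂ) = 1 := by linear_combination -h0
      have : normSq b = 1 := by exact_mod_cast this
      linarith
    exact mul_ne_zero (mul_ne_zero hβ hcane) (div_ne_zero (mul_ne_zero hr0 hbb) hd)
  have hV2ne : (tw g).mulVec q2 ≠ 0 := by
    rw [hV2]; exact smul_ne_zero hsV2 hw
  exact ⟨g, hg, hV1ne, hV2ne,
    mk_eq_of _ _ hV1ne hz _ hsV1 hV1,
    mk_eq_of _ _ hV2ne hw _ hsV2 hV2⟩

lemma slice_h (x y u v T ρ : ℝ) (hT2 : T^2 < 1) (hyx : y = T * x)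
    (hx : x ≠ 0) (hpos : u + T * v ≠ 0) (hρrel : T * u + v = (u + T * v) * ρ) :
    ∃ (a' bp α β : ℂ), (a' * conj a' - bp * conj bp = 1) ∧ α ≠ 0 ∧ β ≠ 0 ∧
      (su a' bp).mulVec ![(x:ℂ), Complex.I * (y:ℂ)] = α • ![1, 0] ∧
      (su (conj a') (conj bp)).mulVec ![(u:ℂ), Complex.I * (v:ℂ)]
        = β • ![(1:ℂ), Complex.I * (ρ:ℝ)] := by
  have h1T : 0 < 1 - T^2 := by linarith
  set r : ℝ := (Real.sqrt (1 - T^2))⁻¹ with hrdef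
  have hrpos : 0 < r := by rw [hrdef]; positivity
  have hrr : r^2 * (1 - T^2) = 1 := by
    rw [hrdef, inv_pow, Real.sq_sqrt h1T.le]
    field_simp
  have hrrC : (r:ℂ)^2 * (1 - (T:ℂ)^2) = 1 := by exact_mod_cast hrr
  refine ⟨(r:ℂ), (r:ℂ) * (Complex.I * (T:ℂ)), ((r * (x * (1 - T^2)) : ℝ) : ℂ),
    ((r * (u + T * v) : ℝ) : ℂ), ?_, ?_, ?_, ?_, ?_⟩
  · simp only [_root_.map_mul, Complex.conj_ofReal, Complex.conj_I]
    linear_combination hrrC + (r:ℂ)^2 * (T:ℂ)^2 * Complex.I_sq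
  · have : r * (x * (1 - T^2)) ≠ 0 := by
      apply mul_ne_zero hrpos.ne'
      exact mul_ne_zero hx (by linarith)
    exact_mod_cast this
  · have : r * (u + T * v) ≠ 0 := mul_ne_zero hrpos.ne' hpos
    exact_mod_cast this
  · rw [su_mulVec]
    ext i
    fin_cases i
    · show (r:ℂ) * (x:ℂ) + (r:ℂ) * (Complex.I * (T:ℂ)) * (Complex.I * (y:ℂ))
          = ((r * (x * (1 - T^2)) : ℝ) : ℂ) * 1
      have hyxC : (y:ℂ) = (T:ℂ) * (x:ℂ) := by exact_mod_cast hyx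
      rw [hyxC]
      push_cast
      linear_combination (r:ℂ) * (T:ℂ)^2 * (x:ℂ) * Complex.I_sq
    · show conj ((r:ℂ) * (Complex.I * (T:ℂ))) * (x:ℂ) + conj ((r:ℂ)) * (Complex.I * (y:ℂ))
          = ((r * (x * (1 - T^2)) : ℝ) : ℂ) * 0
      simp only [_root_.map_mul, Complex.conj_ofReal, Complex.conj_I]
      have hyxC : (y:ℂ) = (T:ℂ) * (x:ℂ) := by exact_mod_cast hyx
      rw [hyxC]
      ring
  · rw [show conj ((r:ℂ)) = (r:ℂ) from Complex.conj_ofReal r]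
    rw [show conj ((r:ℂ) * (Complex.I * (T:ℂ))) = (r:ℂ) * (-Complex.I * (T:ℂ)) by
      simp only [_root_.map_mul, Complex.conj_ofReal, Complex.conj_I]]
    rw [su_mulVec]
    have hρC : (T:ℂ) * (u:ℂ) + (v:ℂ) = ((u:ℂ) + (T:ℂ) * (v:ℂ)) * (ρ:ℂ) := by
      exact_mod_cast hρrel
    ext i
    fin_cases i
    · show (r:ℂ) * (u:ℂ) + (r:ℂ) * (-Complex.I * (T:ℂ)) * (Complex.I * (v:ℂ))
          = ((r * (u + T * v) : ℝ) : ℂ) * 1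
      push_cast
      linear_combination -((r:ℂ) * (T:ℂ) * (v:ℂ)) * Complex.I_sq
    · show conj ((r:ℂ) * (-Complex.I * (T:ℂ))) * (u:ℂ) + conj ((r:ℂ)) * (Complex.I * (v:ℂ))
          = ((r * (u + T * v) : ℝ) : ℂ) * (Complex.I * (ρ:ℝ))
      simp only [_root_.map_mul, map_neg, Complex.conj_ofReal, Complex.conj_I, neg_neg]
      push_cast
      linear_combination (r:ℂ) * Complex.I * hρC

set_option maxHeartbeats 2000000 in
/-- The union of the `SU(1,1)`-translates of the slice points
`{z₁} ∪ ℓ₁((0,1)) ∪ {w₁} ∪ ℓ₂((0,∞))` is exactly the domain `W`. -/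
theorem union_of_translates_eq_W :
    {p : P1 × P1 | ∃ g : M2, SU11 g ∧
      ∃ q : (Fin 2 → ℂ) × (Fin 2 → ℂ),
        (q = z1v ∨ (∃ t : ℝ, 0 < t ∧ t < 1 ∧ q = l1v t) ∨ q = w1v ∨
          (∃ s : ℝ, 0 < s ∧ q = l2v s)) ∧
        ∃ (hz : g.mulVec q.1 ≠ 0) (hw : (tw g).mulVec q.2 ≠ 0),
          p = (Projectivization.mk ℂ (g.mulVec q.1) hz,
               Projectivization.mk ℂ ((tw g).mulVec q.2) hw)} = W := by
  ext p
  constructor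
  · rintro ⟨g, hg, q, hq, hz1, hw1, hp⟩
    rcases hq with rfl | ⟨t, ht0, ht1, rfl⟩ | rfl | ⟨s, hs, rfl⟩
    · -- z1v
      have hf := forward hg 1 0 1 0 (by simp) (by norm_num)
      exact ⟨_, _, hz1, hw1, hp, hf.1, hf.2⟩
    · -- l1v
      set A := Real.pi * (1 - t) / 4 with hA
      have hπ := Real.pi_pos
      have hApos : 0 < A := by rw [hA]; nlinarith
      have hA4 : A < Real.pi / 4 := by rw [hA]; nlinarith
      have hcos2A : 0 < Real.cos (2 * A) :=
        Real.cos_pos_of_mem_Ioo ⟨by nlinarith, by nlinarith⟩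
      have hcs : Real.cos A ^ 2 - Real.sin A ^ 2 = Real.cos (2 * A) :=
        (Real.cos_two_mul' A).symm
      have hf := forward hg ((Real.cos A : ℂ)) (Complex.I * (Real.sin A : ℂ))
        ((Real.cos A : ℂ)) (Complex.I * (Real.sin A : ℂ))
        (by
          simp only [Complex.normSq_mul, Complex.normSq_I, Complex.normSq_ofReal, one_mul]
          nlinarith)
        (by
          have hone : (Real.cos A : ℂ) * (Real.cos A : ℂ)
              - (Complex.I * (Real.sin A : ℂ)) * (Complex.I * (Real.sin A : ℂ)) = 1 := by
            have h' : ((Real.cos A : ℂ))^2 + ((Real.sin A : ℂ))^2 = 1 := by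
              exact_mod_cast (by linarith [Real.sin_sq_add_cos_sq A] :
                (Real.cos A)^2 + (Real.sin A)^2 = 1)
            linear_combination h' - ((Real.sin A : ℂ))^2 * Complex.I_sq
          rw [hone]
          exact one_ne_zero)
      exact ⟨_, _, hz1, hw1, hp, hf.1, hf.2⟩
    · -- w1v
      have hf := forward hg 1 0 1 Complex.I (by simp) (by simp)
      exact ⟨_, _, hz1, hw1, hp, hf.1, hf.2⟩
    · -- l2v
      have hE1 : Real.exp (-s) < Real.exp s := Real.exp_lt_exp.mpr (by linarith)
      have hEp := Real.exp_pos s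
      have hEn := Real.exp_pos (-s)
      have hprod : Real.exp s * Real.exp (-s) = 1 := by
        rw [← Real.exp_add]; simp
      have hf := forward hg ((Real.exp s : ℂ)) (Complex.I * (Real.exp (-s) : ℂ))
        ((Real.exp (-s) : ℂ)) (Complex.I * (Real.exp s : ℂ))
        (by
          simp only [Complex.normSq_mul, Complex.normSq_I, Complex.normSq_ofReal, one_mul]
          nlinarith)
        (by
          have hone : (Real.exp s : ℂ) * (Real.exp (-s) : ℂ)
              - (Complex.I * (Real.exp (-s) : ℂ)) * (Complex.I * (Real.exp s : ℂ)) = 2 := by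
            have hc : (Real.exp s : ℂ) * (Real.exp (-s) : ℂ) = 1 := by
              exact_mod_cast hprod
            linear_combination 2 * hc - (Real.exp s : ℂ) * (Real.exp (-s) : ℂ) * Complex.I_sq
          rw [hone]
          exact two_ne_zero)
      exact ⟨_, _, hz1, hw1, hp, hf.1, hf.2⟩
  · rintro ⟨z, w, hz, hw, rfl, hlt, hB⟩
    set c' := (w 1 - conj (z 1 / z 0) * w 0) / (w 0 - z 1 / z 0 * w 1) with hc'
    by_cases h0 : ‖c'‖ = 0
    · -- slice point z1v
      have h1 : (su 1 0).mulVec ![(1:ℂ), 0] = (1:ℂ) • ![1, 0] := by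
        rw [su_mulVec]
        ext i
        fin_cases i
        · show (1:ℂ) * 1 + 0 * 0 = 1 * 1
          ring
        · show conj (0:ℂ) * 1 + conj (1:ℂ) * 0 = 1 * 0
          simp
      have h2 : (su (conj 1) (conj 0)).mulVec ![(1:ℂ), 0]
          = (1:ℂ) • ![(1:ℂ), Complex.I * ((0:ℝ):ℂ)] := by
        rw [su_mulVec]
        ext i
        fin_cases i
        · show conj (1:ℂ) * 1 + conj (0:ℂ) * 0 = 1 * 1
          simp
        · show conj (conj (0:ℂ)) * 1 + conj (conj (1:ℂ)) * 0 = 1 * (Complex.I * ((0:ℝ):ℂ))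
          simp
      obtain ⟨g, hg, h1', h2', e1, e2⟩ := key z w hz hw hlt hB ![1, 0] ![1, 0] 1 0
        (by simp) 1 1 one_ne_zero one_ne_zero 0 h1 h2 (by rw [← hc']; exact h0)
      exact ⟨g, hg, z1v, Or.inl rfl, h1', h2', congrArg₂ Prod.mk e1.symm e2.symm⟩
    · rcases lt_trichotomy ‖c'‖ 1 with hlt1 | heq1 | hgt1
      · -- slice l1v
        have hρpos : 0 < ‖c'‖ :=
          lt_of_le_of_ne (norm_nonneg c') (Ne.symm h0)
        set ρ := ‖c'‖ with hρdef
        have hπ := Real.pi_pos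
        have harc1 : 0 < Real.arcsin ρ := Real.arcsin_pos.mpr hρpos
        have harc2 : Real.arcsin ρ < Real.pi / 2 := Real.arcsin_lt_pi_div_two.mpr hlt1
        set t := 1 - Real.arcsin ρ * 2 / Real.pi with htdef
        have ht0 : 0 < t := by
          rw [htdef]
          rw [sub_pos, div_lt_one hπ]
          linarith
        have ht1 : t < 1 := by
          rw [htdef]
          have : 0 < Real.arcsin ρ * 2 / Real.pi := by positivity
          linarith
        set A := Real.pi * (1 - t) / 4 with hA
        have hA2 : 2 * A = Real.arcsin ρ := by
          rw [hA, htdef]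
          field_simp
          ring
        have hApos : 0 < A := by nlinarith
        have hA4 : A < Real.pi / 4 := by nlinarith
        have hcosA : 0 < Real.cos A :=
          Real.cos_pos_of_mem_Ioo ⟨by nlinarith, by nlinarith⟩
        have hcos2A : 0 < Real.cos (2 * A) :=
          Real.cos_pos_of_mem_Ioo ⟨by nlinarith, by nlinarith⟩
        have hsin2A : Real.sin (2 * A) = ρ := by
          rw [hA2]
          exact Real.sin_arcsin (by linarith) hlt1.le
        have h2s : 2 * Real.sin A * Real.cos A = ρ := by
          rw [← Real.sin_two_mul, hsin2A]
        have hcs : Real.cos A ^ 2 - Real.sin A ^ 2 = Real.cos (2 * A) :=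
          (Real.cos_two_mul' A).symm
        set T := Real.sin A / Real.cos A with hT
        have hT2 : T^2 < 1 := by
          rw [hT, div_pow, div_lt_one (by positivity)]
          nlinarith
        have hyx : Real.sin A = T * Real.cos A := by
          rw [hT]; field_simp
        have hpose : Real.cos A + T * Real.sin A = 1 / Real.cos A := by
          rw [hT]
          field_simp
          linear_combination Real.sin_sq_add_cos_sq A
        have hpos : Real.cos A + T * Real.sin A ≠ 0 := by
          rw [hpose]; positivity
        have hρrel : T * Real.cos A + Real.sin A = (Real.cos A + T * Real.sin A) * ρ := by
          rw [hpose, hT]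
          field_simp
          nlinarith [Real.sin_sq_add_cos_sq A, h2s]
        obtain ⟨a', bp, α, β, hcond', hα, hβ, h1, h2⟩ :=
          slice_h (Real.cos A) (Real.sin A) (Real.cos A) (Real.sin A) T ρ hT2 hyx
            hcosA.ne' hpos hρrel
        obtain ⟨g, hg, h1', h2', e1, e2⟩ := key z w hz hw hlt hB
          ![(Real.cos A : ℂ), Complex.I * (Real.sin A : ℂ)]
          ![(Real.cos A : ℂ), Complex.I * (Real.sin A : ℂ)]
          a' bp hcond' α β hα hβ ρ h1 h2 (by rw [← hc'])
        exact ⟨g, hg, l1v t, Or.inr (Or.inl ⟨t, ht0, ht1, rfl⟩), h1', h2',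
          congrArg₂ Prod.mk e1.symm e2.symm⟩
      · -- slice w1v
        have h1 : (su 1 0).mulVec ![(1:ℂ), 0] = (1:ℂ) • ![1, 0] := by
          rw [su_mulVec]
          ext i
          fin_cases i
          · show (1:ℂ) * 1 + 0 * 0 = 1 * 1
            ring
          · show conj (0:ℂ) * 1 + conj (1:ℂ) * 0 = 1 * 0
            simp
        have h2 : (su (conj 1) (conj 0)).mulVec ![(1:ℂ), Complex.I]
            = (1:ℂ) • ![(1:ℂ), Complex.I * ((1:ℝ):ℂ)] := by
          rw [su_mulVec]
          ext i
          fin_cases i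
          · show conj (1:ℂ) * 1 + conj (0:ℂ) * Complex.I = 1 * 1
            simp
          · show conj (conj (0:ℂ)) * 1 + conj (conj (1:ℂ)) * Complex.I
                = 1 * (Complex.I * ((1:ℝ):ℂ))
            simp
        obtain ⟨g, hg, h1', h2', e1, e2⟩ := key z w hz hw hlt hB ![1, 0] ![1, Complex.I] 1 0
          (by simp) 1 1 one_ne_zero one_ne_zero 1 h1 h2 (by rw [← hc']; exact heq1)
        exact ⟨g, hg, w1v, Or.inr (Or.inr (Or.inl rfl)), h1', h2',
          congrArg₂ Prod.mk e1.symm e2.symm⟩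
      · -- slice l2v
        set ρ := ‖c'‖ with hρdef
        have hρpos : 0 < ρ := by linarith
        have hsq : 0 < ρ^2 - 1 := by nlinarith
        set s := Real.arsinh (Real.sqrt (ρ^2 - 1)) / 2 with hsdef
        have hsqrtpos : 0 < Real.sqrt (ρ^2 - 1) := Real.sqrt_pos.mpr hsq
        have hs : 0 < s := by
          rw [hsdef]
          have : 0 < Real.arsinh (Real.sqrt (ρ^2 - 1)) := by
            rw [← Real.arsinh_zero]
            exact Real.arsinh_lt_arsinh.mpr hsqrtpos
          linarith
        have hsinh : Real.sinh (2 * s) = Real.sqrt (ρ^2 - 1) := by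
          rw [hsdef]
          rw [show 2 * (Real.arsinh (Real.sqrt (ρ^2 - 1)) / 2)
              = Real.arsinh (Real.sqrt (ρ^2 - 1)) by ring]
          exact Real.sinh_arsinh _
        have hcosh : Real.cosh (2 * s) = ρ := by
          have hc2 : Real.cosh (2 * s) ^ 2 = ρ ^ 2 := by
            rw [Real.cosh_sq, hsinh, Real.sq_sqrt hsq.le]
            ring
          nlinarith [Real.cosh_pos (2 * s)]
        have hEpos : 0 < Real.exp s := Real.exp_pos s
        have hE1 : 1 < Real.exp s := Real.one_lt_exp_iff.mpr hs
        have hEneg : Real.exp (-s) = (Real.exp s)⁻¹ := Real.exp_neg s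
        have hE2s : Real.exp (2 * s) = Real.exp s * Real.exp s := by
          rw [two_mul, Real.exp_add]
        have hEneg2 : Real.exp (-(2 * s)) = (Real.exp s * Real.exp s)⁻¹ := by
          rw [Real.exp_neg, hE2s]
        have hρ2 : ρ = (Real.exp (2 * s) + Real.exp (-(2 * s))) / 2 := by
          rw [← hcosh, Real.cosh_eq]
        have hT2 : (Real.exp (-(2 * s)))^2 < 1 := by
          have hEE : 1 < Real.exp s * Real.exp s := by nlinarith
          rw [hEneg2, inv_pow, inv_lt_one_iff₀]
          right
          nlinarith
        have hyx : Real.exp (-s) = Real.exp (-(2 * s)) * Real.exp s := by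
          rw [hEneg, hEneg2]
          field_simp
        have hpos : Real.exp (-s) + Real.exp (-(2 * s)) * Real.exp s ≠ 0 := by
          have h1' := Real.exp_pos (-s)
          have h2' := Real.exp_pos (-(2 * s))
          positivity
        have hρrel : Real.exp (-(2 * s)) * Real.exp (-s) + Real.exp s
            = (Real.exp (-s) + Real.exp (-(2 * s)) * Real.exp s) * ρ := by
          rw [hρ2, hE2s, hEneg2, hEneg]
          field_simp
          ring
        obtain ⟨a', bp, α, β, hcond', hα, hβ, h1, h2⟩ :=
          slice_h (Real.exp s) (Real.exp (-s)) (Real.exp (-s)) (Real.exp s)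
            (Real.exp (-(2 * s))) ρ hT2 hyx (Real.exp_pos s).ne' hpos hρrel
        obtain ⟨g, hg, h1', h2', e1, e2⟩ := key z w hz hw hlt hB
          ![(Real.exp s : ℂ), Complex.I * (Real.exp (-s) : ℂ)]
          ![(Real.exp (-s) : ℂ), Complex.I * (Real.exp s : ℂ)]
          a' bp hcond' α β hα hβ ρ h1 h2 (by rw [← hc'])
        exact ⟨g, hg, l2v s, Or.inr (Or.inr (Or.inr ⟨s, hs, rfl⟩)), h1', h2',
          congrArg₂ Prod.mk e1.symm e2.symm⟩


end
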